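/- Let D be a finite-dimensional real Lie algebra, D* its dual space, and θ: D×D → D* an alternating bilinear map that is a 2-cocycle (θ([x,y],z) + θ([y,z],x) + θ([z,x],y) = 0). Define the central extension g = D ⊕ D* with bracket [x₁+f₁, x₂+f₂] = [x₁,x₂]_D + θ(x₁,x₂), and the hyperbolic metric ⟨x₁+f₁, x₂+f₂⟩ = f₁(x₂) + f₂(x₁). Then the Ricci tensor of (g,⟨·,·⟩) satisfies ric(x,y) = −(1/2)K(x,y) for all x,y ∈ g, where K is the Killing form of g. -/

import Mathlib

/-- The Ricci tensor of a left-invariant metric determined by a connection `nabla`: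
`ric(x,y) = tr (ξ ↦ ∇_ξ ∇_x y − ∇_x ∇_ξ y − ∇_{[ξ,x]} y)`. -/
noncomputable def ricci {g : Type*} [LieRing g] [LieAlgebra ℝ g]
    (nabla : g →ₗ[ℝ] g →ₗ[ℝ] g) (x y : g) : ℝ :=
  LinearMap.trace ℝ g
    (nabla.flip (nabla x y) - nabla x ∘ₗ nabla.flip y +
      nabla.flip y ∘ₗ (LieAlgebra.ad ℝ g x : g →ₗ[ℝ] g))

/-- `nabla` is the Levi-Civita connection of the metric Lie algebra `(g, B)`
(Koszul formula). -/
def IsLeviCivita {g : Type*} [LieRing g] [LieAlgebra ℝ g]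
    (B : g →ₗ[ℝ] g →ₗ[ℝ] ℝ) (nabla : g →ₗ[ℝ] g →ₗ[ℝ] g) : Prop :=
  ∀ x y z : g, 2 * B (nabla x y) z = B ⁅x, y⁆ z - B ⁅y, z⁆ x + B ⁅z, x⁆ y

/-- Ricci-parallel: `(∇_x ric)(y,z) = −ric(∇_x y, z) − ric(y, ∇_x z) = 0`. -/
noncomputable def IsRicciParallel {g : Type*} [LieRing g] [LieAlgebra ℝ g]
    (nabla : g →ₗ[ℝ] g →ₗ[ℝ] g) : Prop :=
  ∀ x y z : g, ricci nabla (nabla x y) z + ricci nabla y (nabla x z) = 0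


/-- Auxiliary dual-valued expression: the `D*`-component of the Levi-Civita
connection of the hyperbolic metric on the central extension. -/
noncomputable def Pmap {D : Type*} [LieRing D] [LieAlgebra ℝ D]
    (θ : D →ₗ[ℝ] D →ₗ[ℝ] Module.Dual ℝ D) (a c : D) (f d : Module.Dual ℝ D) :
    Module.Dual ℝ D :=
  (2⁻¹ : ℝ) • (θ a c - (θ c).flip a + (θ.flip a).flip c
    - d ∘ₗ (LieAlgebra.ad ℝ D a : D →ₗ[ℝ] D) - f ∘ₗ (LieAlgebra.ad ℝ D c : D →ₗ[ℝ] D))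

lemma Pmap_apply {D : Type*} [LieRing D] [LieAlgebra ℝ D]
    (θ : D →ₗ[ℝ] D →ₗ[ℝ] Module.Dual ℝ D) (a c : D) (f d : Module.Dual ℝ D) (z : D) :
    Pmap θ a c f d z = 2⁻¹ * (θ a c z - θ c z a + θ z a c - d ⁅a, z⁆ - f ⁅c, z⁆) := by
  simp only [Pmap, LinearMap.smul_apply, LinearMap.sub_apply, LinearMap.add_apply,
    LinearMap.comp_apply, LinearMap.flip_apply, LieAlgebra.ad_apply, smul_eq_mul]

/-- On the central extension g = D ⊕ D* with the hyperbolic metric, the Ricci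
tensor equals −(1/2) times the Killing form of g. -/
theorem stmt_4 (D : Type*) [LieRing D] [LieAlgebra ℝ D] [FiniteDimensional ℝ D]
    (g : Type*) [LieRing g] [LieAlgebra ℝ g] [FiniteDimensional ℝ g]
    (θ : D →ₗ[ℝ] D →ₗ[ℝ] Module.Dual ℝ D)
    (hθalt : ∀ x : D, θ x x = 0)
    (hθcoc : ∀ x y z : D, θ ⁅x, y⁆ z + θ ⁅y, z⁆ x + θ ⁅z, x⁆ y = 0)
    (i : D →ₗ[ℝ] g) (j : Module.Dual ℝ D →ₗ[ℝ] g)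
    (hsurj : ∀ w : g, ∃ (x : D) (f : Module.Dual ℝ D), w = i x + j f)
    (hbr : ∀ (x x' : D) (f f' : Module.Dual ℝ D),
      ⁅i x + j f, i x' + j f'⁆ = i ⁅x, x'⁆ + j (θ x x'))
    (B : g →ₗ[ℝ] g →ₗ[ℝ] ℝ)
    (hB : ∀ (x x' : D) (f f' : Module.Dual ℝ D),
      B (i x + j f) (i x' + j f') = f x' + f' x)
    (hnd : ∀ w : g, (∀ z : g, B w z = 0) → w = 0)
    (nabla : g →ₗ[ℝ] g →ₗ[ℝ] g)
    (hLC : IsLeviCivita B nabla) :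
    ∀ x y : g, ricci nabla x y = -(1/2) * killingForm ℝ g x y := by
  classical
  -- extensionality via the nondegenerate form
  have hext : ∀ w w' : g, (∀ z : g, B w z = B w' z) → w = w' := by
    intro w w' h
    have h0 : ∀ z : g, B (w - w') z = 0 := by
      intro z; simp [h z]
    exact sub_eq_zero.mp (hnd _ h0)
  -- the linear equivalence D × D* ≃ g
  set Φ : (D × Module.Dual ℝ D) →ₗ[ℝ] g :=
    i ∘ₗ LinearMap.fst ℝ D (Module.Dual ℝ D) + j ∘ₗ LinearMap.snd ℝ D (Module.Dual ℝ D)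
    with hΦdef
  have hΦ : ∀ p : D × Module.Dual ℝ D, Φ p = i p.1 + j p.2 := fun p => rfl
  have hΦbij : Function.Bijective Φ := by
    constructor
    · rw [← LinearMap.ker_eq_bot, LinearMap.ker_eq_bot']
      intro p hp
      have h1 : ∀ (z : D) (h' : Module.Dual ℝ D), p.2 z + h' p.1 = 0 := by
        intro z h'
        have hb := hB p.1 z p.2 h'
        rw [← hΦ p, hp] at hb
        simpa using hb.symm
      have hf : p.2 = 0 := by ext z; simpa using h1 z 0
      have hx0 : p.1 = 0 := by
        refine (Module.forall_dual_apply_eq_zero_iff ℝ p.1).mp ?_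
        intro φ; simpa [hf] using h1 0 φ
      exact Prod.ext hx0 hf
    · intro w
      obtain ⟨x', f', rfl⟩ := hsurj w
      exact ⟨(x', f'), hΦ _⟩
  set e : (D × Module.Dual ℝ D) ≃ₗ[ℝ] g := LinearEquiv.ofBijective Φ hΦbij with hedef
  set π₁ : g →ₗ[ℝ] D :=
    LinearMap.fst ℝ D (Module.Dual ℝ D) ∘ₗ (e.symm : g →ₗ[ℝ] D × Module.Dual ℝ D) with hπ₁def
  set π₂ : g →ₗ[ℝ] Module.Dual ℝ D :=
    LinearMap.snd ℝ D (Module.Dual ℝ D) ∘ₗ (e.symm : g →ₗ[ℝ] D × Module.Dual ℝ D) with hπ₂def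
  have hsymm : ∀ (x' : D) (f' : Module.Dual ℝ D), e.symm (i x' + j f') = (x', f') := by
    intro x' f'
    rw [LinearEquiv.symm_apply_eq, hedef, LinearEquiv.ofBijective_apply]
    exact (hΦ (x', f')).symm
  have hπ₁ : ∀ (x' : D) (f' : Module.Dual ℝ D), π₁ (i x' + j f') = x' := by
    intro x' f'; simp [hπ₁def, hsymm]
  have hπ₂ : ∀ (x' : D) (f' : Module.Dual ℝ D), π₂ (i x' + j f') = f' := by
    intro x' f'; simp [hπ₂def, hsymm]
  have hid : ∀ w : g, i (π₁ w) + j (π₂ w) = w := by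
    intro w
    have h1 : Φ (e.symm w) = w := e.apply_symm_apply w
    rw [hΦ] at h1; exact h1
  -- trace decomposition
  have htr : ∀ S : g →ₗ[ℝ] g, LinearMap.trace ℝ g S
      = LinearMap.trace ℝ D (π₁ ∘ₗ (S ∘ₗ i))
        + LinearMap.trace ℝ (Module.Dual ℝ D) (π₂ ∘ₗ (S ∘ₗ j)) := by
    intro S
    have h1 : S = (S ∘ₗ i) ∘ₗ π₁ + (S ∘ₗ j) ∘ₗ π₂ := by
      ext w
      simp only [LinearMap.add_apply, LinearMap.comp_apply]
      rw [← map_add, hid w]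
    calc LinearMap.trace ℝ g S
        = LinearMap.trace ℝ g ((S ∘ₗ i) ∘ₗ π₁ + (S ∘ₗ j) ∘ₗ π₂) := by rw [← h1]
      _ = _ := by
          rw [map_add]
          exact congrArg₂ (· + ·) (LinearMap.trace_comp_comm' π₁ (S ∘ₗ i))
            (LinearMap.trace_comp_comm' π₂ (S ∘ₗ j))

  -- explicit formula for the Levi-Civita connection
  have hnabla : ∀ (a c : D) (f d : Module.Dual ℝ D),
      nabla (i a + j f) (i c + j d) = i ((2⁻¹ : ℝ) • ⁅a, c⁆) + j (Pmap θ a c f d) := by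
    intro a c f d
    apply hext
    intro w
    obtain ⟨z, h', rfl⟩ := hsurj w
    have hk := hLC (i a + j f) (i c + j d) (i z + j h')
    rw [hbr a c f d, hbr c z d h', hbr z a h' f, hB, hB, hB] at hk
    rw [hB ((2⁻¹ : ℝ) • ⁅a, c⁆) z (Pmap θ a c f d) h', Pmap_apply]
    have h2 : d ⁅z, a⁆ = -(d ⁅a, z⁆) := by rw [← lie_skew a z, map_neg, neg_neg]
    have h3 : h' ((2⁻¹ : ℝ) • ⁅a, c⁆) = 2⁻¹ * h' ⁅a, c⁆ := by
      rw [map_smul, smul_eq_mul]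
    rw [h3]
    rw [h2] at hk
    linarith [hk]
  have hπ₁i : ∀ z : D, π₁ (i z) = z := fun z => by simpa using hπ₁ z 0
  have hπ₂i : ∀ z : D, π₂ (i z) = 0 := fun z => by simpa using hπ₂ z 0
  have hπ₁j : ∀ h' : Module.Dual ℝ D, π₁ (j h') = 0 := fun h' => by simpa using hπ₁ 0 h'
  have hπ₂j : ∀ h' : Module.Dual ℝ D, π₂ (j h') = h' := fun h' => by simpa using hπ₂ 0 h'
  have hπ₁nabla : ∀ w w' : g, π₁ (nabla w w') = (2⁻¹ : ℝ) • ⁅π₁ w, π₁ w'⁆ := by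
    intro w w'
    obtain ⟨z, h', rfl⟩ := hsurj w
    obtain ⟨z', h'', rfl⟩ := hsurj w'
    rw [hnabla, hπ₁ _ _, hπ₁ z h', hπ₁ z' h'']
  have hπ₂nabla : ∀ w w' : g, π₂ (nabla w w') = Pmap θ (π₁ w) (π₁ w') (π₂ w) (π₂ w') := by
    intro w w'
    obtain ⟨z, h', rfl⟩ := hsurj w
    obtain ⟨z', h'', rfl⟩ := hsurj w'
    rw [hnabla, hπ₂ _ _, hπ₁ z h', hπ₁ z' h'', hπ₂ z h', hπ₂ z' h'']
  have hπ₁br : ∀ w w' : g, π₁ ⁅w, w'⁆ = ⁅π₁ w, π₁ w'⁆ := by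
    intro w w'
    obtain ⟨z, h', rfl⟩ := hsurj w
    obtain ⟨z', h'', rfl⟩ := hsurj w'
    rw [hbr, hπ₁ _ _, hπ₁ z h', hπ₁ z' h'']
  intro x y
  obtain ⟨a, f, hx⟩ := hsurj x
  obtain ⟨c, d, hy⟩ := hsurj y
  have hπ₁x : π₁ x = a := by rw [hx]; exact hπ₁ a f
  have hπ₂x : π₂ x = f := by rw [hx]; exact hπ₂ a f
  have hπ₁y : π₁ y = c := by rw [hy]; exact hπ₁ c d
  have hπ₂y : π₂ y = d := by rw [hy]; exact hπ₂ c d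
  set T : g →ₗ[ℝ] g := nabla.flip (nabla x y) - nabla x ∘ₗ nabla.flip y +
      nabla.flip y ∘ₗ (LieAlgebra.ad ℝ g x : g →ₗ[ℝ] g) with hT
  have hTapp : ∀ w : g, T w = nabla w (nabla x y) - nabla x (nabla w y) + nabla ⁅x, w⁆ y := by
    intro w
    rw [hT]
    simp only [LinearMap.add_apply, LinearMap.sub_apply, LinearMap.comp_apply,
      LinearMap.flip_apply, LieAlgebra.ad_apply]
  set ada : D →ₗ[ℝ] D := (LieAlgebra.ad ℝ D a : D →ₗ[ℝ] D) with hada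
  set adc : D →ₗ[ℝ] D := (LieAlgebra.ad ℝ D c : D →ₗ[ℝ] D) with hadc
  -- first diagonal block of the Ricci endomorphism
  have hb1 : π₁ ∘ₗ (T ∘ₗ i) = (-(4⁻¹ : ℝ)) • (adc ∘ₗ ada) := by
    ext z
    simp only [LinearMap.comp_apply, LinearMap.smul_apply, hada, hadc, LieAlgebra.ad_apply]
    rw [hTapp]
    simp only [map_add, map_sub, hπ₁nabla, hπ₁br, hπ₁i, hπ₁x, hπ₁y]
    rw [lie_smul, lie_smul, leibniz_lie a z c, ← lie_skew c ⁅a, z⁆]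
    module
  have hbj : ∀ h' : Module.Dual ℝ D, ⁅x, j h'⁆ = 0 := by
    intro h'
    have hj0 : j h' = i 0 + j h' := by rw [map_zero, zero_add]
    rw [hx, hj0, hbr]
    simp
  have hbjy : ∀ h' : Module.Dual ℝ D, ⁅y, j h'⁆ = 0 := by
    intro h'
    have hj0 : j h' = i 0 + j h' := by rw [map_zero, zero_add]
    rw [hy, hj0, hbr]
    simp
  -- second diagonal block
  have hb2 : π₂ ∘ₗ (T ∘ₗ j) = Module.Dual.transpose (R := ℝ)
      ((-(4⁻¹ : ℝ)) • ((LieAlgebra.ad ℝ D ⁅a, c⁆ : D →ₗ[ℝ] D) + adc ∘ₗ ada)) := by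
    ext h' z
    simp only [LinearMap.comp_apply]
    rw [hTapp, hbj h']
    simp only [map_zero, LinearMap.zero_apply, add_zero, map_sub, LinearMap.sub_apply,
      hπ₂nabla, hπ₁nabla, hπ₁j, hπ₂j, hπ₁x, hπ₂x, hπ₁y, hπ₂y]
    simp only [zero_lie, lie_zero, smul_zero, Pmap_apply, map_zero, LinearMap.zero_apply,
      smul_lie, map_smul, smul_eq_mul, Module.Dual.transpose_apply, LinearMap.smul_apply, LinearMap.comp_apply,
      LinearMap.add_apply, LieAlgebra.ad_apply, map_add, hada, hadc, map_neg, neg_mul,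
      mul_zero, zero_sub, sub_zero, zero_add, neg_neg, neg_zero, mul_neg]
    ring
  have htr0 : LinearMap.trace ℝ D (LieAlgebra.ad ℝ D ⁅a, c⁆ : D →ₗ[ℝ] D) = 0 := by
    have h2 : (LieAlgebra.ad ℝ D ⁅a, c⁆ : D →ₗ[ℝ] D) = (LieAlgebra.ad ℝ D a : D →ₗ[ℝ] D) *
        (LieAlgebra.ad ℝ D c : D →ₗ[ℝ] D) - (LieAlgebra.ad ℝ D c : D →ₗ[ℝ] D) *
        (LieAlgebra.ad ℝ D a : D →ₗ[ℝ] D) := by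
      ext z; simp [lie_lie]
    rw [h2, map_sub, LinearMap.trace_mul_comm, sub_self]
  -- the Killing form of g
  have hK : killingForm ℝ g x y = LinearMap.trace ℝ D (adc ∘ₗ ada) := by
    rw [killingForm_apply_apply, htr]
    have hk1 : π₁ ∘ₗ (((LieAlgebra.ad ℝ g x : g →ₗ[ℝ] g) ∘ₗ
        (LieAlgebra.ad ℝ g y : g →ₗ[ℝ] g)) ∘ₗ i) = ada ∘ₗ adc := by
      ext z
      simp only [LinearMap.comp_apply, LieAlgebra.ad_apply, hada, hadc]
      rw [hπ₁br, hπ₁br, hπ₁x, hπ₁y, hπ₁i]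
    have hk2 : π₂ ∘ₗ (((LieAlgebra.ad ℝ g x : g →ₗ[ℝ] g) ∘ₗ
        (LieAlgebra.ad ℝ g y : g →ₗ[ℝ] g)) ∘ₗ j) = 0 := by
      ext h' z
      simp only [LinearMap.comp_apply, LieAlgebra.ad_apply, LinearMap.zero_apply]
      rw [hbjy h']
      simp
    rw [hk1, hk2, map_zero, add_zero, ← Module.End.mul_eq_comp, ← Module.End.mul_eq_comp,
      LinearMap.trace_mul_comm]
  have hric : ricci nabla x y = LinearMap.trace ℝ g T := by unfold ricci; rw [hT]
  set K0 : ℝ := LinearMap.trace ℝ D (adc ∘ₗ ada) with hK0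
  have e1 : LinearMap.trace ℝ D (π₁ ∘ₗ (T ∘ₗ i)) = -(4⁻¹) * K0 := by
    rw [hb1, map_smul, smul_eq_mul, hK0]
  have e2 : LinearMap.trace ℝ (Module.Dual ℝ D) (π₂ ∘ₗ (T ∘ₗ j)) = -(4⁻¹) * K0 := by
    rw [hb2, LinearMap.trace_transpose', map_smul, smul_eq_mul, map_add, htr0, zero_add, hK0]
  rw [hric, htr T, e1, e2, hK]
  ring
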